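/- Let n ≥ 1 and let P be a row-stochastic n×n matrix. Then there exists a probability vector π on Fin n that is stationary for P, i.e. a nontrivial nonnegative solution of (I − Pᵀ)π = 0, meaning Σ_i π i · P i j = π j for all j. -/

import Mathlib

open Finset Filter Topology

/-- Every row-stochastic matrix admits a stationary probability
vector, i.e. a nontrivial nonnegative solution of `(I − Pᵀ)π = 0`. -/
theorem exists_stationary_distribution
    (n : ℕ) (hn : 1 ≤ n) (P : Fin n → Fin n → ℝ)
    (hP0 : ∀ i j, 0 ≤ P i j) (hP1 : ∀ i, ∑ j, P i j = 1) :
    ∃ π : Fin n → ℝ,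
      (∀ i, 0 ≤ π i) ∧ (∑ i, π i = 1) ∧ (∀ j, ∑ i, π i * P i j = π j) := by
  have hn0 : (n : ℝ) ≠ 0 := Nat.cast_ne_zero.mpr (by omega)
  -- The transition operator as a linear map
  set L : (Fin n → ℝ) →ₗ[ℝ] (Fin n → ℝ) :=
    { toFun := fun π j => ∑ i, π i * P i j
      map_add' := by
        intro x y; funext j
        simp [add_mul, Finset.sum_add_distrib]
      map_smul' := by
        intro c x; funext j
        simp [Finset.mul_sum, mul_assoc] } with hL
  have hLapp : ∀ (π : Fin n → ℝ) j, L π j = ∑ i, π i * P i j := fun _ _ => rfl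
  have hLcont : Continuous L := L.continuous_of_finiteDimensional
  set S := stdSimplex ℝ (Fin n) with hS
  have hSmem : ∀ x : Fin n → ℝ, x ∈ S ↔ (∀ i, 0 ≤ x i) ∧ ∑ i, x i = 1 := by
    intro x; rfl
  have hLmaps : ∀ x ∈ S, L x ∈ S := by
    intro x hx
    rw [hSmem] at hx ⊢
    refine ⟨fun j => ?_, ?_⟩
    · rw [hLapp]
      exact Finset.sum_nonneg fun i _ => mul_nonneg (hx.1 i) (hP0 i j)
    calc ∑ j, L x j = ∑ i, ∑ j, x i * P i j := by
          simp only [hLapp]; exact Finset.sum_comm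
      _ = ∑ i, x i * ∑ j, P i j := by simp [Finset.mul_sum]
      _ = 1 := by simp [hP1, hx.2]
  -- starting point: uniform distribution
  set u : Fin n → ℝ := fun _ => (n : ℝ)⁻¹ with hu
  have huS : u ∈ S := by
    rw [hSmem]
    constructor
    · intro i; positivity
    · simp [hu, hn0]
  have hiter : ∀ k, (⇑L)^[k] u ∈ S := by
    intro k; induction k with
    | zero => simpa using huS
    | succ m ih => rw [Function.iterate_succ_apply']; exact hLmaps _ ih
  -- Cesàro averages
  set w : ℕ → (Fin n → ℝ) := fun m => ((m + 1 : ℝ))⁻¹ • ∑ k ∈ Finset.range (m + 1), (⇑L)^[k] u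
    with hw
  have hm1 : ∀ m : ℕ, ((m : ℝ) + 1) ≠ 0 := fun m => by positivity
  have hwS : ∀ m, w m ∈ S := by
    intro m
    rw [hSmem]
    constructor
    · intro i
      simp only [hw, Pi.smul_apply, Finset.sum_apply, smul_eq_mul]
      have h1 : (0:ℝ) ≤ ((m : ℝ) + 1)⁻¹ := by positivity
      refine mul_nonneg h1 (Finset.sum_nonneg fun k _ => ((hSmem _).mp (hiter k)).1 i)
    · simp only [hw, Pi.smul_apply, Finset.sum_apply, smul_eq_mul]
      rw [← Finset.mul_sum, Finset.sum_comm]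
      have : ∀ k ∈ Finset.range (m+1), ∑ i, (⇑L)^[k] u i = 1 :=
        fun k _ => ((hSmem _).mp (hiter k)).2
      rw [Finset.sum_congr rfl this]
      simp [hm1 m]
  -- extract a convergent subsequence
  obtain ⟨π, hπS, φ, hφ, hlim⟩ := (isCompact_stdSimplex ℝ (Fin n)).tendsto_subseq hwS
  -- key identity: L (w m) - w m = (m+1)⁻¹ • ((⇑L)^[m+1] u - u)
  have hkey : ∀ m, L (w m) - w m = ((m + 1 : ℝ))⁻¹ • ((⇑L)^[m+1] u - u) := by
    intro m
    have h1 : L (w m) = ((m + 1 : ℝ))⁻¹ • ∑ k ∈ Finset.range (m + 1), (⇑L)^[k+1] u := by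
      rw [hw]
      simp only [map_smul, map_sum]
      congr 1
      refine Finset.sum_congr rfl fun k _ => ?_
      rw [← Function.iterate_succ_apply' L]
    have h2 : ∑ k ∈ Finset.range (m + 1), (⇑L)^[k+1] u
        = (∑ k ∈ Finset.range (m + 1), (⇑L)^[k] u) + (⇑L)^[m+1] u - u := by
      rw [Finset.sum_range_succ (fun k => (⇑L)^[k+1] u) m,
        Finset.sum_range_succ' (fun k => (⇑L)^[k] u) m]
      simp only [Function.iterate_zero_apply]
      abel
    rw [h1, h2, hw]
    rw [smul_sub, smul_add]
    abel_nf
    rw [smul_add, smul_comm _ (-1 : ℤ) u]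
  -- the simplex is bounded
  have hSnorm : ∀ x ∈ S, ‖x‖ ≤ 1 := by
    intro x hx
    rw [hSmem] at hx
    rw [pi_norm_le_iff_of_nonneg zero_le_one]
    intro i
    rw [Real.norm_eq_abs, abs_of_nonneg (hx.1 i)]
    calc x i ≤ ∑ j, x j := Finset.single_le_sum (fun j _ => hx.1 j) (Finset.mem_univ i)
      _ = 1 := hx.2
  -- the defect tends to zero
  have hdef : Tendsto (fun m => L (w (φ m)) - w (φ m)) atTop (𝓝 0) := by
    refine squeeze_zero_norm (a := fun m => 2 * ((φ m : ℝ) + 1)⁻¹) ?_ ?_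
    · intro m
      rw [hkey]
      rw [norm_smul]
      have h1 : ‖((φ m : ℝ) + 1)⁻¹‖ = ((φ m : ℝ) + 1)⁻¹ := by
        rw [Real.norm_eq_abs, abs_of_nonneg (by positivity)]
      rw [h1]
      show _ ≤ 2 * ((φ m : ℝ) + 1)⁻¹
      rw [mul_comm (2:ℝ)]
      refine mul_le_mul_of_nonneg_left ?_ (by positivity)
      calc ‖(⇑L)^[φ m + 1] u - u‖ ≤ ‖(⇑L)^[φ m + 1] u‖ + ‖u‖ := norm_sub_le _ _
        _ ≤ 1 + 1 := add_le_add (hSnorm _ (hiter _)) (hSnorm _ huS)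
        _ = 2 := by norm_num
    · have h1 : Tendsto (fun m => ((φ m : ℝ) + 1)) atTop atTop := by
        apply tendsto_atTop_add_const_right
        exact tendsto_natCast_atTop_atTop.comp hφ.tendsto_atTop
      simpa using (h1.inv_tendsto_atTop).const_mul (2:ℝ)
  -- conclude L π = π
  have h1 : Tendsto (fun m => L (w (φ m))) atTop (𝓝 π) := by
    have := hdef.add hlim
    simpa using this
  have h2 : Tendsto (fun m => L (w (φ m))) atTop (𝓝 (L π)) :=
    (hLcont.tendsto π).comp hlim
  have hfix : L π = π := tendsto_nhds_unique h2 h1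
  rw [hSmem] at hπS
  exact ⟨π, hπS.1, hπS.2, fun j => by rw [← hLapp, hfix]⟩
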